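/- Let f : (0,1] → [0,∞] be a nonincreasing function with ∫₀¹ f(p) dp ≤ 1, and let V be a random variable on a probability space (Ω, 𝓕, P) with values in (0,1] satisfying P(V ≤ ε) ≤ ε for every ε ∈ (0,1]. Then E[f(V)] ≤ 1; i.e., every such calibrator f turns a p-value into an e-value. -/

import Mathlib

open MeasureTheory ENNReal

/-- Pointwise layer-cake fact: the Lebesgue measure of `{t ∈ Ioi 0 | ofReal t < x}` is `x`. -/
lemma volume_layer (x : ℝ≥0∞) :
    volume ({t : ℝ | ENNReal.ofReal t < x} ∩ Set.Ioi 0) = x := by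
  rcases eq_or_ne x ∞ with hx | hx
  · have : {t : ℝ | ENNReal.ofReal t < x} ∩ Set.Ioi 0 = Set.Ioi 0 := by
      ext t; simp [hx, ENNReal.ofReal_lt_top]
    rw [this, hx]
    simp [Real.volume_Ioi]
  · have : {t : ℝ | ENNReal.ofReal t < x} ∩ Set.Ioi 0 = Set.Ioo 0 x.toReal := by
      ext t
      constructor
      · rintro ⟨h1, h2⟩
        exact ⟨h2, (ENNReal.ofReal_lt_iff_lt_toReal (le_of_lt h2) hx).mp h1⟩
      · rintro ⟨h2, h1⟩
        exact ⟨(ENNReal.ofReal_lt_iff_lt_toReal (le_of_lt h2) hx).mpr h1, h2⟩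
    rw [this, Real.volume_Ioo, sub_zero, ENNReal.ofReal_toReal hx]

/-- Layer cake formula for `ℝ≥0∞`-valued functions. -/
lemma lintegral_eq_layercake {α : Type*} [MeasurableSpace α] (μ : Measure α) [SigmaFinite μ]
    {g : α → ℝ≥0∞} (hg : Measurable g) :
    ∫⁻ a, g a ∂μ = ∫⁻ t in Set.Ioi (0 : ℝ), μ {a | ENNReal.ofReal t < g a} := by
  have hA : MeasurableSet {z : α × ℝ | ENNReal.ofReal z.2 < g z.1} :=
    measurableSet_lt (ENNReal.measurable_ofReal.comp measurable_snd) (hg.comp measurable_fst)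
  have key : ∀ a, g a = ∫⁻ t in Set.Ioi (0 : ℝ),
      Set.indicator {t : ℝ | ENNReal.ofReal t < g a} 1 t := by
    intro a
    have hs : MeasurableSet {t : ℝ | ENNReal.ofReal t < g a} :=
      measurableSet_lt ENNReal.measurable_ofReal measurable_const
    calc g a = volume ({t : ℝ | ENNReal.ofReal t < g a} ∩ Set.Ioi 0) := (volume_layer _).symm
      _ = (volume.restrict (Set.Ioi 0)) {t : ℝ | ENNReal.ofReal t < g a} :=
          (Measure.restrict_apply hs).symm
      _ = ∫⁻ t in Set.Ioi (0 : ℝ),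
            Set.indicator {t : ℝ | ENNReal.ofReal t < g a} 1 t :=
          (lintegral_indicator_one hs).symm
  calc ∫⁻ a, g a ∂μ
      = ∫⁻ a, (∫⁻ t in Set.Ioi (0 : ℝ),
          Set.indicator {t : ℝ | ENNReal.ofReal t < g a} 1 t) ∂μ := by
        exact lintegral_congr key
    _ = ∫⁻ t in Set.Ioi (0 : ℝ), (∫⁻ a,
          Set.indicator {t : ℝ | ENNReal.ofReal t < g a} 1 t ∂μ) := by
        apply lintegral_lintegral_swap
        have : (Function.uncurry fun a t =>
            Set.indicator {t : ℝ | ENNReal.ofReal t < g a} 1 t) =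
            Set.indicator {z : α × ℝ | ENNReal.ofReal z.2 < g z.1}
              (1 : α × ℝ → ℝ≥0∞) := by
          ext ⟨a, t⟩
          by_cases h : ENNReal.ofReal t < g a <;>
            simp [Function.uncurry, Set.indicator, h]
        rw [this]
        exact ((measurable_one.indicator hA)).aemeasurable
    _ = ∫⁻ t in Set.Ioi (0 : ℝ), μ {a | ENNReal.ofReal t < g a} := by
        apply lintegral_congr
        intro t
        rw [← lintegral_indicator_one
          (show MeasurableSet {a | ENNReal.ofReal t < g a} from hg measurableSet_Ioi)]
        apply lintegral_congr
        intro a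
        by_cases h : ENNReal.ofReal t < g a <;> simp [Set.indicator, h]

/-- Every calibrator turns a p-value into an e-value: if
`f : (0,1] → [0,∞]` is nonincreasing with `∫₀¹ f ≤ 1`, and `V` is a `(0,1]`-valued
random variable with `P(V ≤ ε) ≤ ε` for all `ε ∈ (0,1]`, then `E[f(V)] ≤ 1`. -/
theorem calibrator_turns_p_value_into_e_value
    {Ω : Type*} [MeasurableSpace Ω] (P : Measure Ω) [IsProbabilityMeasure P]
    (f : ℝ → ℝ≥0∞) (hmono : ∀ p ∈ Set.Ioc (0 : ℝ) 1, ∀ q ∈ Set.Ioc (0 : ℝ) 1,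
      p ≤ q → f q ≤ f p)
    (hint : ∫⁻ p in Set.Ioc (0 : ℝ) 1, f p ≤ 1)
    (V : Ω → ℝ) (hV : Measurable V) (hVrange : ∀ ω, V ω ∈ Set.Ioc (0 : ℝ) 1)
    (hpval : ∀ ε ∈ Set.Ioc (0 : ℝ) 1, P {ω | V ω ≤ ε} ≤ ENNReal.ofReal ε) :
    ∫⁻ ω, f (V ω) ∂P ≤ 1 := by
  -- antitone extension of `f`
  set F : ℝ → ℝ≥0∞ := fun p => if p ≤ 0 then ∞ else f (min p 1) with hF
  have hFeq : ∀ p ∈ Set.Ioc (0 : ℝ) 1, F p = f p := by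
    intro p hp
    simp only [hF, if_neg (not_le.mpr hp.1), min_eq_left hp.2]
  have hFanti : Antitone F := by
    intro p q hpq
    by_cases hp : p ≤ 0
    · simp [hF, hp]
    · have hq : ¬ q ≤ 0 := fun h => hp (hpq.trans h)
      simp only [hF, if_neg hp, if_neg hq]
      exact hmono _ ⟨lt_min (lt_of_not_ge hp) one_pos, min_le_right _ _⟩ _
        ⟨lt_min (lt_of_not_ge hq) one_pos, min_le_right _ _⟩
        (min_le_min hpq le_rfl)
  have hFmeas : Measurable F := hFanti.measurable
  have hcomp : ∀ ω, f (V ω) = F (V ω) := fun ω => (hFeq _ (hVrange ω)).symm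
  -- key pointwise comparison of tail measures
  have hkey : ∀ t : ℝ, P {ω | ENNReal.ofReal t < F (V ω)} ≤
      (volume.restrict (Set.Ioc (0 : ℝ) 1)) {p | ENNReal.ofReal t < F p} := by
    intro t
    rw [Measure.restrict_apply
      (show MeasurableSet {p : ℝ | ENNReal.ofReal t < F p} from hFmeas measurableSet_Ioi)]
    set S : Set ℝ := {p | ENNReal.ofReal t < F p} ∩ Set.Ioc 0 1 with hS
    rcases S.eq_empty_or_nonempty with hSe | hSne
    · have : {ω | ENNReal.ofReal t < F (V ω)} = ∅ := by
        ext ω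
        simp only [Set.mem_setOf_eq, Set.mem_empty_iff_false, iff_false]
        intro h
        exact Set.eq_empty_iff_forall_notMem.mp hSe (V ω) ⟨h, hVrange ω⟩
      rw [this]; simp
    · have hbdd : BddAbove S := ⟨1, fun x hx => hx.2.2⟩
      set s : ℝ := sSup S with hs
      have hsmem : ∀ x ∈ S, x ≤ s := fun x hx => le_csSup hbdd hx
      obtain ⟨x0, hx0⟩ := id hSne
      have hs_pos : 0 < s := lt_of_lt_of_le hx0.2.1 (hsmem _ hx0)
      have hs_le : s ≤ 1 := csSup_le hSne fun x hx => hx.2.2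
      -- P side
      have h1 : P {ω | ENNReal.ofReal t < F (V ω)} ≤ ENNReal.ofReal s := by
        refine le_trans (measure_mono ?_) (hpval s ⟨hs_pos, hs_le⟩)
        intro ω hω
        exact hsmem _ ⟨hω, hVrange ω⟩
      -- volume side
      have h2 : ENNReal.ofReal s ≤ volume S := by
        have hsub : Set.Ioo 0 s ⊆ S := by
          intro q hq
          obtain ⟨p, hpS, hqp⟩ := exists_lt_of_lt_csSup hSne hq.2
          have hq1 : q ≤ 1 := le_trans (le_of_lt hqp) hpS.2.2
          have hlt : ENNReal.ofReal t < F q :=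
            lt_of_lt_of_le hpS.1 (hFanti (le_of_lt hqp))
          exact ⟨hlt, hq.1, hq1⟩
        calc ENNReal.ofReal s = volume (Set.Ioo (0:ℝ) s) := by
              rw [Real.volume_Ioo, sub_zero]
          _ ≤ volume S := measure_mono hsub
      exact le_trans h1 h2
  -- put it together
  calc ∫⁻ ω, f (V ω) ∂P = ∫⁻ ω, F (V ω) ∂P := lintegral_congr hcomp
    _ = ∫⁻ t in Set.Ioi (0 : ℝ), P {ω | ENNReal.ofReal t < F (V ω)} :=
        lintegral_eq_layercake P (hFmeas.comp hV)
    _ ≤ ∫⁻ t in Set.Ioi (0 : ℝ),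
          (volume.restrict (Set.Ioc (0 : ℝ) 1)) {p | ENNReal.ofReal t < F p} :=
        lintegral_mono fun t => hkey t
    _ = ∫⁻ p in Set.Ioc (0 : ℝ) 1, F p :=
        (lintegral_eq_layercake (volume.restrict (Set.Ioc (0 : ℝ) 1)) hFmeas).symm
    _ = ∫⁻ p in Set.Ioc (0 : ℝ) 1, f p :=
        setLIntegral_congr_fun measurableSet_Ioc (
          fun p hp => (hFeq p hp))
    _ ≤ 1 := hint
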